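/- Let u be a classical solution of problem (B) on [-1,1]×[0,T] with initial data u0 ∈ C^1([-1,1]), and suppose |u(x,t)| ≤ K for all x ∈ [-1,1], t ∈ [0,T]. Then |u_x(x,t)| ≤ max{ sup_{[-1,1]} |u0'| , K } for all x ∈ [-1,1] and t ∈ [0,T]. -/

import Mathlib

open Real

/-- Partial derivative in `x` of a function `u(x,t)`. -/
noncomputable def ux (u : ℝ → ℝ → ℝ) (x t : ℝ) : ℝ := deriv (fun y => u y t) x

/-- Second partial derivative in `x` of a function `u(x,t)`. -/
noncomputable def uxx (u : ℝ → ℝ → ℝ) (x t : ℝ) : ℝ := deriv (fun y => ux u y t) x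

/-- Partial derivative in `t` of a function `u(x,t)`. -/
noncomputable def ut (u : ℝ → ℝ → ℝ) (x t : ℝ) : ℝ := deriv (fun s => u x s) t

/-- A classical solution of problem (B) on `[-1,1] × [0,T]` with initial data `u0`:
`u` and `u_x` are continuous on the closed rectangle, `u` is `C^{2,1}` in
`(-1,1) × (0,T]` where it satisfies `u_t = u_xx/(1+u_x²)`, with boundary
conditions `u_x(±1,t) = ±u(±1,t)` and initial condition `u(·,0) = u0`. -/
def IsClassicalSolB (u : ℝ → ℝ → ℝ) (u0 : ℝ → ℝ) (T : ℝ) : Prop :=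
  ContinuousOn (fun p : ℝ × ℝ => u p.1 p.2) (Set.Icc (-1 : ℝ) 1 ×ˢ Set.Icc (0 : ℝ) T) ∧
  ContinuousOn (fun p : ℝ × ℝ => ux u p.1 p.2) (Set.Icc (-1 : ℝ) 1 ×ˢ Set.Icc (0 : ℝ) T) ∧
  (∀ t ∈ Set.Ioc (0 : ℝ) T, ∀ x ∈ Set.Ioo (-1 : ℝ) 1,
    DifferentiableAt ℝ (fun y => u y t) x ∧
    DifferentiableAt ℝ (fun y => ux u y t) x ∧
    DifferentiableAt ℝ (fun s => u x s) t ∧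
    ut u x t = uxx u x t / (1 + ux u x t ^ 2)) ∧
  (∀ t ∈ Set.Ioc (0 : ℝ) T, ux u 1 t = u 1 t ∧ ux u (-1) t = - u (-1) t) ∧
  (∀ x ∈ Set.Icc (-1 : ℝ) 1, u x 0 = u0 x)


open Set Filter Topology

lemma mvt_slice (T : ℝ) (u : ℝ → ℝ → ℝ)
    (hcu : ContinuousOn (fun p : ℝ × ℝ => u p.1 p.2) (Icc (-1:ℝ) 1 ×ˢ Icc (0:ℝ) T))
    (hdiff : ∀ t ∈ Ioc (0:ℝ) T, ∀ x ∈ Ioo (-1:ℝ) 1, DifferentiableAt ℝ (fun y => u y t) x)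
    {t a b : ℝ} (ht : t ∈ Ioc (0:ℝ) T) (ha : -1 ≤ a) (hab : a < b) (hb : b ≤ 1) :
    ∃ ξ ∈ Ioo a b, u b t - u a t = ux u ξ t * (b - a) := by
  have hcont : ContinuousOn (fun x => u x t) (Icc a b) := by
    have : ContinuousOn (fun x : ℝ => ((x, t) : ℝ × ℝ)) (Icc a b) :=
      (continuous_id.prodMk continuous_const).continuousOn
    refine (hcu.comp this ?_)
    intro x hx
    exact ⟨⟨le_trans ha hx.1, le_trans hx.2 hb⟩, ⟨ht.1.le, ht.2⟩⟩
  have hder : ∀ x ∈ Ioo a b, HasDerivAt (fun y => u y t) (ux u x t) x := by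
    intro x hx
    have : x ∈ Ioo (-1:ℝ) 1 := ⟨lt_of_le_of_lt ha hx.1, lt_of_lt_of_le hx.2 hb⟩
    exact (hdiff t ht x this).hasDerivAt
  obtain ⟨ξ, hξ, hEq⟩ := exists_hasDerivAt_eq_slope (fun y => u y t) (fun ξ => ux u ξ t) hab hcont hder
  refine ⟨ξ, hξ, ?_⟩
  have hba : b - a ≠ 0 := by linarith [hξ.1, hξ.2]
  field_simp at hEq
  linarith [hEq]


lemma diffquot_bound (T : ℝ) (hT : 0 < T) (u : ℝ → ℝ → ℝ) (h : ℝ) (hh : 0 < h) (hh2 : h < 2)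
    (hcu : ContinuousOn (fun p : ℝ × ℝ => u p.1 p.2) (Icc (-1:ℝ) 1 ×ˢ Icc (0:ℝ) T))
    (hpde : ∀ t ∈ Ioc (0:ℝ) T, ∀ x ∈ Ioo (-1:ℝ) 1,
      DifferentiableAt ℝ (fun y => u y t) x ∧
      DifferentiableAt ℝ (fun y => ux u y t) x ∧
      DifferentiableAt ℝ (fun s => u x s) t ∧
      ut u x t = uxx u x t / (1 + ux u x t ^ 2))
    (C : ℝ)
    (hinit : ∀ x, -1 ≤ x → x + h ≤ 1 → u (x+h) 0 - u x 0 ≤ C * h)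
    (hleft : ∀ t ∈ Ioc (0:ℝ) T, ∀ ξ ∈ Ioo (-1:ℝ) (-1+h), ux u ξ t ≤ C)
    (hright : ∀ t ∈ Ioc (0:ℝ) T, ∀ ξ ∈ Ioo (1-h) 1, ux u ξ t ≤ C) :
    ∀ x, -1 ≤ x → x + h ≤ 1 → ∀ t ∈ Icc (0:ℝ) T, u (x+h) t - u x t ≤ C * h := by
  intro x hx hxh t htmem
  refine le_of_forall_pos_le_add (fun η hη => ?_)
  set ε : ℝ := η / (T + 1) with hε
  have hεpos : 0 < ε := by positivity
  -- the perturbed function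
  set φ : ℝ × ℝ → ℝ := fun p => u (p.1 + h) p.2 - u p.1 p.2 - ε * p.2 with hφ
  set Rh : Set (ℝ × ℝ) := Icc (-1:ℝ) (1-h) ×ˢ Icc (0:ℝ) T with hRh
  have hRhsub : ∀ p : ℝ × ℝ, p ∈ Rh → (p.1 + h, p.2) ∈ Icc (-1:ℝ) 1 ×ˢ Icc (0:ℝ) T ∧
      p ∈ Icc (-1:ℝ) 1 ×ˢ Icc (0:ℝ) T := by
    intro p hp
    simp only [mem_prod, mem_Icc] at hp ⊢
    obtain ⟨⟨h1, h2⟩, h3⟩ := hp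
    refine ⟨⟨⟨by linarith, by linarith⟩, h3⟩, ⟨⟨by linarith, by linarith⟩, h3⟩⟩
  have hcomp : IsCompact Rh := isCompact_Icc.prod isCompact_Icc
  have hne : Rh.Nonempty := by
    refine ⟨(-1, 0), ?_⟩
    simp only [hRh, mem_prod, mem_Icc]
    exact ⟨⟨le_refl _, by linarith⟩, le_refl _, hT.le⟩
  have hφc : ContinuousOn φ Rh := by
    have h1 : ContinuousOn (fun p : ℝ × ℝ => u (p.1 + h) p.2) Rh := by
      have hmap : ContinuousOn (fun p : ℝ × ℝ => ((p.1 + h, p.2) : ℝ × ℝ)) Rh :=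
        ((continuous_fst.add continuous_const).prodMk continuous_snd).continuousOn
      exact hcu.comp hmap (fun p hp => (hRhsub p hp).1)
    have h2 : ContinuousOn (fun p : ℝ × ℝ => u p.1 p.2) Rh :=
      hcu.mono (fun p hp => (hRhsub p hp).2)
    exact (h1.sub h2).sub (continuous_const.mul continuous_snd).continuousOn
  obtain ⟨p0, hp0, hmax'⟩ := hcomp.exists_isMaxOn hne hφc
  have hmax : ∀ p ∈ Rh, φ p ≤ φ p0 := fun p hp => hmax' hp
  obtain ⟨y0, s0⟩ := p0
  obtain ⟨hy0, hs0⟩ : y0 ∈ Icc (-1:ℝ) (1-h) ∧ s0 ∈ Icc (0:ℝ) T := hp0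
  -- key: the max value is at most C * h
  have key : φ (y0, s0) ≤ C * h := by
    rcases eq_or_lt_of_le hs0.1 with h0 | hs0pos
    · -- initial time
      have hi := hinit y0 hy0.1 (by linarith [hy0.2])
      show u (y0 + h) s0 - u y0 s0 - ε * s0 ≤ C * h
      rw [← h0]
      simpa using hi
    · have hs0' : s0 ∈ Ioc (0:ℝ) T := ⟨hs0pos, hs0.2⟩
      have hdiffx : ∀ t ∈ Ioc (0:ℝ) T, ∀ z ∈ Ioo (-1:ℝ) 1, DifferentiableAt ℝ (fun y => u y t) z :=
        fun t ht z hz => (hpde t ht z hz).1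
      rcases eq_or_lt_of_le hy0.1 with hl | hl
      · -- left boundary
        obtain ⟨ξ, hξ, hEq⟩ := mvt_slice T u hcu hdiffx hs0' (le_refl (-1:ℝ))
          (by linarith : (-1:ℝ) < -1 + h) (by linarith : (-1:ℝ) + h ≤ 1)
        have hξC : ux u ξ s0 ≤ C := hleft s0 hs0' ξ hξ
        have : u (-1 + h) s0 - u (-1) s0 ≤ C * h := by
          rw [hEq]
          have : (-1 + h) - (-1) = h := by ring
          rw [this]
          exact mul_le_mul_of_nonneg_right hξC hh.le
        have hεs : 0 ≤ ε * s0 := by positivity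
        show u (y0 + h) s0 - u y0 s0 - ε * s0 ≤ C * h
        rw [← hl]
        linarith
      rcases eq_or_lt_of_le hy0.2 with hr | hr
      · -- right boundary
        obtain ⟨ξ, hξ, hEq⟩ := mvt_slice T u hcu hdiffx hs0'
          (by linarith : (-1:ℝ) ≤ 1 - h) (by linarith : (1:ℝ) - h < 1) (le_refl (1:ℝ))
        have hξC : ux u ξ s0 ≤ C := hright s0 hs0' ξ hξ
        have hbb : u 1 s0 - u (1 - h) s0 ≤ C * h := by
          rw [hEq]
          have : (1:ℝ) - (1 - h) = h := by ring
          rw [this]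
          exact mul_le_mul_of_nonneg_right hξC hh.le
        have hεs : 0 ≤ ε * s0 := by positivity
        show u (y0 + h) s0 - u y0 s0 - ε * s0 ≤ C * h
        rw [hr]
        have h1h : (1:ℝ) - h + h = 1 := by ring
        rw [h1h]
        linarith
      · -- interior: contradiction
        exfalso
        have hy0m : y0 ∈ Ioo (-1:ℝ) 1 := ⟨hl, by linarith⟩
        have hy0hm : y0 + h ∈ Ioo (-1:ℝ) 1 := ⟨by linarith, by linarith⟩
        obtain ⟨hd1, hw1, ht1, he1⟩ := hpde s0 hs0' y0 hy0m
        obtain ⟨hd2, hw2, ht2, he2⟩ := hpde s0 hs0' (y0 + h) hy0hm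
        -- Step A : time derivative at max is ≥ ε
        set D : ℝ := ut u (y0 + h) s0 - ut u y0 s0 - ε with hD
        have hg : HasDerivAt (fun s => u (y0 + h) s - u y0 s - ε * s) D s0 := by
          have h1 : HasDerivAt (fun s => u (y0 + h) s) (ut u (y0 + h) s0) s0 := ht2.hasDerivAt
          have h2 : HasDerivAt (fun s => u y0 s) (ut u y0 s0) s0 := ht1.hasDerivAt
          have h3 : HasDerivAt (fun s : ℝ => ε * s) ε s0 := by
            simpa using (hasDerivAt_id s0).const_mul ε
          exact (h1.sub h2).sub h3
        have hDge : 0 ≤ D := by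
          have htend : Tendsto (slope (fun s => u (y0 + h) s - u y0 s - ε * s) s0) (𝓝[<] s0) (𝓝 D) :=
            (hasDerivAt_iff_tendsto_slope.mp hg).mono_left
              (nhdsWithin_mono _ (fun z hz => ne_of_lt hz))
          refine ge_of_tendsto htend ?_
          filter_upwards [Ioo_mem_nhdsLT_of_mem (⟨hs0pos, le_refl s0⟩ : s0 ∈ Ioc 0 s0)] with s hs
          have hsIcc : (y0, s) ∈ Rh := ⟨⟨hy0.1, hy0.2⟩, ⟨hs.1.le, le_trans hs.2.le hs0.2⟩⟩
          have hφle : φ (y0, s) ≤ φ (y0, s0) := hmax _ hsIcc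
          have e1 : φ (y0, s) = u (y0 + h) s - u y0 s - ε * s := rfl
          have e2 : φ (y0, s0) = u (y0 + h) s0 - u y0 s0 - ε * s0 := rfl
          rw [e1, e2] at hφle
          have hnum : (fun s => u (y0 + h) s - u y0 s - ε * s) s - (fun s => u (y0 + h) s - u y0 s - ε * s) s0 ≤ 0 := by
            simp only
            linarith [hφle]
          rw [slope_def_field, div_nonneg_iff]
          right
          constructor
          · simpa using hnum
          · simp only [sub_nonpos]
            linarith [hs.2]
        -- Step B : spatial derivative of difference is zero at max
        have hψder : ∀ z ∈ Ioo (-1:ℝ) (1 - h),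
            HasDerivAt (fun x => u (x + h) s0 - u x s0) (ux u (z + h) s0 - ux u z s0) z := by
          intro z hz
          have hz1 : z ∈ Ioo (-1:ℝ) 1 := ⟨hz.1, by linarith [hz.2]⟩
          have hz2 : z + h ∈ Ioo (-1:ℝ) 1 := ⟨by linarith [hz.1], by linarith [hz.2]⟩
          have A : HasDerivAt (fun y => u y s0) (ux u (z + h) s0) (z + h) :=
            ((hpde s0 hs0' (z + h) hz2).1).hasDerivAt
          have B : HasDerivAt (fun x : ℝ => u (x + h) s0) (ux u (z + h) s0) z := by
            have := A.comp z ((hasDerivAt_id z).add_const h)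
            simpa [Function.comp_def] using this
          exact B.sub ((hpde s0 hs0' z hz1).1).hasDerivAt
        have hψmax : ∀ z ∈ Icc (-1:ℝ) (1 - h),
            u (z + h) s0 - u z s0 ≤ u (y0 + h) s0 - u y0 s0 := by
          intro z hz
          have hle : φ (z, s0) ≤ φ (y0, s0) := hmax _ ⟨hz, hs0⟩
          have e1 : φ (z, s0) = u (z + h) s0 - u z s0 - ε * s0 := rfl
          have e2 : φ (y0, s0) = u (y0 + h) s0 - u y0 s0 - ε * s0 := rfl
          rw [e1, e2] at hle
          linarith
        have hχ0 : ux u (y0 + h) s0 - ux u y0 s0 = 0 := by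
          have hloc : IsLocalMax (fun x => u (x + h) s0 - u x s0) y0 := by
            have hIcc : Icc (-1:ℝ) (1 - h) ∈ 𝓝 y0 := Icc_mem_nhds hl hr
            exact Filter.eventually_of_mem hIcc (fun z hz => hψmax z hz)
          exact hloc.hasDerivAt_eq_zero (hψder y0 ⟨hl, hr⟩)
        -- Step C : second-difference is strictly positive
        set W : ℝ := ux u y0 s0 with hW
        have hWeq : ux u (y0 + h) s0 = W := by rw [hW]; linarith [hχ0]
        have hKpos : 0 < uxx u (y0 + h) s0 - uxx u y0 s0 := by
          have hp : (0:ℝ) < 1 + W ^ 2 := by positivity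
          have hDe : ε ≤ uxx u (y0 + h) s0 / (1 + W ^ 2) - uxx u y0 s0 / (1 + W ^ 2) := by
            rw [hWeq] at he2
            rw [← he1, ← he2]
            linarith [hDge]
          rw [div_sub_div_same] at hDe
          have := (le_div_iff₀ hp).mp hDe
          nlinarith [hεpos, sq_nonneg W]
        -- Step D : contradiction via strict monotonicity
        have hχder : HasDerivAt (fun x => ux u (x + h) s0 - ux u x s0)
            (uxx u (y0 + h) s0 - uxx u y0 s0) y0 := by
          have A2 : HasDerivAt (fun y => ux u y s0) (uxx u (y0 + h) s0) (y0 + h) := hw2.hasDerivAt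
          have B2 : HasDerivAt (fun x : ℝ => ux u (x + h) s0) (uxx u (y0 + h) s0) y0 := by
            have := A2.comp y0 ((hasDerivAt_id y0).add_const h)
            simpa [Function.comp_def] using this
          exact B2.sub hw1.hasDerivAt
        have hmemIoo : Ioo (-1:ℝ) (1 - h) ∈ 𝓝 y0 := (isOpen_Ioo).mem_nhds ⟨hl, hr⟩
        have h2' : ∀ᶠ z in 𝓝 y0, z ∈ Ioo (-1:ℝ) (1 - h) := hmemIoo
        have h2 : ∀ᶠ z in 𝓝[>] y0, z ∈ Ioo (-1:ℝ) (1 - h) := h2'.filter_mono nhdsWithin_le_nhds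
        have h1 : ∀ᶠ z in 𝓝[>] y0, 0 < slope (fun x => ux u (x + h) s0 - ux u x s0) y0 z := by
          have ht1' : Tendsto (slope (fun x => ux u (x + h) s0 - ux u x s0) y0) (𝓝[>] y0)
              (𝓝 (uxx u (y0 + h) s0 - uxx u y0 s0)) :=
            (hasDerivAt_iff_tendsto_slope.mp hχder).mono_left
              (nhdsWithin_mono _ (fun z hz => ne_of_gt hz))
          exact ht1'.eventually (eventually_gt_nhds hKpos)
        obtain ⟨b', hb', hsub⟩ := mem_nhdsGT_iff_exists_Ioo_subset.mp (h1.and h2)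
        set m : ℝ := (y0 + b') / 2 with hm
        have hym : y0 < m := by
          have : y0 < b' := hb'
          rw [hm]; linarith
        have hmb : m < b' := by
          have : y0 < b' := hb'
          rw [hm]; linarith
        have hmmem : m ∈ Ioo (-1:ℝ) (1 - h) := (hsub ⟨hym, hmb⟩).2
        have hχpos : ∀ z ∈ Ioo y0 m, 0 < ux u (z + h) s0 - ux u z s0 := by
          intro z hz
          have hz' := hsub ⟨hz.1, lt_trans hz.2 hmb⟩
          have hzy : 0 < z - y0 := by linarith [hz.1]
          have hsl := hz'.1
          rw [slope_def_field] at hsl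
          have hmul := mul_pos hsl hzy
          rw [div_mul_cancel₀ _ (ne_of_gt hzy)] at hmul
          linarith [hχ0]
        have hIccIoo : ∀ z ∈ Icc y0 m, z ∈ Ioo (-1:ℝ) (1 - h) := by
          intro z hz
          rcases eq_or_lt_of_le hz.1 with hzz | hlt
          · rw [← hzz]; exact ⟨hl, hr⟩
          · exact (hsub ⟨hlt, lt_of_le_of_lt hz.2 hmb⟩).2
        have hcontψ : ContinuousOn (fun x => u (x + h) s0 - u x s0) (Icc y0 m) :=
          fun z hz => ((hψder z (hIccIoo z hz)).continuousAt).continuousWithinAt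
        have hsm : StrictMonoOn (fun x => u (x + h) s0 - u x s0) (Icc y0 m) := by
          apply strictMonoOn_of_deriv_pos (convex_Icc y0 m) hcontψ
          intro z hz
          rw [interior_Icc] at hz
          rw [(hψder z (hIccIoo z ⟨hz.1.le, hz.2.le⟩)).deriv]
          exact hχpos z hz
        have hlt2 := hsm (left_mem_Icc.mpr hym.le) (right_mem_Icc.mpr hym.le) hym
        have hle2 := hψmax m ⟨hmmem.1.le, hmmem.2.le⟩
        simp only at hlt2
        linarith
  -- conclude
  have hxt : (x, t) ∈ Rh := ⟨⟨hx, by linarith⟩, htmem⟩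
  have hfin : φ (x, t) ≤ φ (y0, s0) := hmax _ hxt
  have e1 : φ (x, t) = u (x + h) t - u x t - ε * t := rfl
  rw [e1] at hfin
  have hεt : ε * t ≤ η := by
    have h1 : ε * t ≤ ε * T := by
      apply mul_le_mul_of_nonneg_left htmem.2 hεpos.le
    have h2 : ε * T ≤ η := by
      rw [hε]
      rw [div_mul_eq_mul_div, div_le_iff₀ (by linarith : (0:ℝ) < T + 1)]
      nlinarith [hη.le, hT]
    linarith
  linarith [key, hfin]

lemma one_sided (T B : ℝ) (hT : 0 < T) (u : ℝ → ℝ → ℝ)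
    (hcu : ContinuousOn (fun p : ℝ × ℝ => u p.1 p.2) (Icc (-1:ℝ) 1 ×ˢ Icc (0:ℝ) T))
    (hcw : ContinuousOn (fun p : ℝ × ℝ => ux u p.1 p.2) (Icc (-1:ℝ) 1 ×ˢ Icc (0:ℝ) T))
    (hpde : ∀ t ∈ Ioc (0:ℝ) T, ∀ x ∈ Ioo (-1:ℝ) 1,
      DifferentiableAt ℝ (fun y => u y t) x ∧
      DifferentiableAt ℝ (fun y => ux u y t) x ∧
      DifferentiableAt ℝ (fun s => u x s) t ∧
      ut u x t = uxx u x t / (1 + ux u x t ^ 2))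
    (hbd0 : ∀ x ∈ Icc (-1:ℝ) 1, ux u x 0 ≤ B)
    (hslope : ∀ x, -1 ≤ x → ∀ y, x < y → y ≤ 1 → u y 0 - u x 0 ≤ B * (y - x))
    (hlat : ∀ t ∈ Ioc (0:ℝ) T, ux u 1 t ≤ B ∧ ux u (-1) t ≤ B) :
    ∀ x ∈ Icc (-1:ℝ) 1, ∀ t ∈ Icc (0:ℝ) T, ux u x t ≤ B := by
  by_contra hcon
  push_neg at hcon
  obtain ⟨x1, hx1, t1, ht1, hBlt⟩ := hcon
  set R : Set (ℝ × ℝ) := Icc (-1:ℝ) 1 ×ˢ Icc (0:ℝ) T with hRdef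
  have hRc : IsCompact R := isCompact_Icc.prod isCompact_Icc
  have hRne : R.Nonempty := ⟨(x1, t1), ⟨hx1, ht1⟩⟩
  obtain ⟨p0, hp0R, hp0max'⟩ := hRc.exists_isMaxOn hRne hcw
  have hp0max : ∀ p ∈ R, ux u p.1 p.2 ≤ ux u p0.1 p0.2 := fun p hp => hp0max' hp
  set M : ℝ := ux u p0.1 p0.2 with hMdef
  have hMB : B < M := lt_of_lt_of_le hBlt (hp0max (x1, t1) ⟨hx1, ht1⟩)
  set S : Set (ℝ × ℝ) := R ∩ (fun p : ℝ × ℝ => ux u p.1 p.2) ⁻¹' {M} with hSdef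
  have hScl : IsClosed S :=
    hcw.preimage_isClosed_of_isClosed (isClosed_Icc.prod isClosed_Icc) isClosed_singleton
  have hSc : IsCompact S := hRc.of_isClosed_subset hScl inter_subset_left
  have hp0S : p0 ∈ S := ⟨hp0R, rfl⟩
  have hSprop : ∀ p ∈ S, p.2 ∈ Ioc (0:ℝ) T ∧ -1 < p.1 ∧ p.1 < 1 := by
    rintro ⟨a, b⟩ ⟨⟨haI, hbI⟩, hWp⟩
    have hWab : ux u a b = M := hWp
    have haI' : a ∈ Icc (-1:ℝ) 1 := haI
    have hbI' : b ∈ Icc (0:ℝ) T := hbI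
    have hb0 : 0 < b := by
      rcases eq_or_lt_of_le hbI'.1 with hb | hb
      · exfalso
        have h1 : ux u a 0 ≤ B := hbd0 a haI'
        rw [← hb] at hWab
        linarith
      · exact hb
    have hbIoc : b ∈ Ioc (0:ℝ) T := ⟨hb0, hbI'.2⟩
    refine ⟨hbIoc, ?_, ?_⟩
    · rcases eq_or_lt_of_le haI'.1 with ha | ha
      · exfalso
        have h1 : ux u (-1) b ≤ B := (hlat b hbIoc).2
        rw [← ha] at hWab
        linarith
      · exact ha
    · rcases eq_or_lt_of_le haI'.2 with ha | ha
      · exfalso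
        have h1 : ux u 1 b ≤ B := (hlat b hbIoc).1
        rw [ha] at hWab
        linarith
      · exact ha
  obtain ⟨q, hqS, hqmax'⟩ := hSc.exists_isMaxOn ⟨p0, hp0S⟩
    ((continuous_abs.comp continuous_fst).continuousOn)
  set a0 : ℝ := |q.1| with ha0def
  have ha0lt : a0 < 1 := abs_lt.mpr ⟨(hSprop q hqS).2.1, (hSprop q hqS).2.2⟩
  have ha0nn : 0 ≤ a0 := abs_nonneg _
  set c : ℝ := (1 + a0) / 2 with hcdef
  have hac : a0 < c := by rw [hcdef]; linarith
  have hc1 : c < 1 := by rw [hcdef]; linarith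
  have hc0 : 0 < c := by rw [hcdef]; linarith
  set Q : Set (ℝ × ℝ) := (Icc (-1:ℝ) (-c) ∪ Icc c 1) ×ˢ Icc (0:ℝ) T with hQdef
  have hQc : IsCompact Q := (isCompact_Icc.union isCompact_Icc).prod isCompact_Icc
  have hQne : Q.Nonempty := ⟨(1, 0), ⟨Or.inr ⟨hc1.le, le_refl 1⟩, ⟨le_refl 0, hT.le⟩⟩⟩
  have hQsubR : Q ⊆ R := by
    rintro ⟨a, b⟩ ⟨ha, hb⟩
    rcases ha with ha | ha
    · exact ⟨⟨ha.1, by linarith [ha.2]⟩, hb⟩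
    · exact ⟨⟨by linarith [ha.1], ha.2⟩, hb⟩
  obtain ⟨q1, hq1Q, hq1max'⟩ := hQc.exists_isMaxOn hQne (hcw.mono hQsubR)
  have hq1max : ∀ p ∈ Q, ux u p.1 p.2 ≤ ux u q1.1 q1.2 := fun p hp => hq1max' hp
  set M1 : ℝ := ux u q1.1 q1.2 with hM1def
  have hM1M : M1 < M := by
    rcases eq_or_lt_of_le (hp0max q1 (hQsubR hq1Q)) with he | he
    · exfalso
      have hq1S : q1 ∈ S := ⟨hQsubR hq1Q, he⟩
      have h1 : |q1.1| ≤ a0 := hqmax' hq1S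
      have h2 : c ≤ |q1.1| := by
        rcases hq1Q.1 with hq | hq
        · rw [abs_of_nonpos (by linarith [hq.2] : q1.1 ≤ 0)]
          linarith [hq.2]
        · rw [abs_of_nonneg (by linarith [hq.1] : (0:ℝ) ≤ q1.1)]
          exact hq.1
      linarith
    · exact he
  set M2 : ℝ := max M1 B with hM2def
  have hM2M : M2 < M := max_lt hM1M hMB
  -- continuity at p0
  have hcwp0 : ContinuousWithinAt (fun p : ℝ × ℝ => ux u p.1 p.2) R p0 := hcw p0 hp0R
  obtain ⟨δ2, hδ2pos, hδ2⟩ := Metric.continuousWithinAt_iff.mp hcwp0 (M - M2) (by linarith)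
  set h : ℝ := min (δ2 / 2) ((1 - c) / 2) with hhdef
  have hhpos : 0 < h := lt_min (by linarith) (by linarith)
  have hhc : h ≤ 1 - c := le_trans (min_le_right _ _) (by linarith)
  have hh2 : h < 2 := lt_of_le_of_lt hhc (by linarith)
  have hhδ : h < δ2 := lt_of_le_of_lt (min_le_left _ _) (by linarith)
  obtain ⟨x0, t0⟩ := p0
  have hx0a : |x0| ≤ a0 := hqmax' hp0S
  have ht0 : t0 ∈ Ioc (0:ℝ) T := (hSprop _ hp0S).1
  have hx0c : x0 ≤ a0 := (abs_le.mp hx0a).2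
  have hx0c' : -a0 ≤ x0 := (abs_le.mp hx0a).1
  have hx0h : x0 + h ≤ 1 := by linarith [hcdef, hhc, hx0c, ha0lt, hac]
  have hdiffx : ∀ t ∈ Ioc (0:ℝ) T, ∀ z ∈ Ioo (-1:ℝ) 1, DifferentiableAt ℝ (fun y => u y t) z :=
    fun t ht z hz => (hpde t ht z hz).1
  have hmain := diffquot_bound T hT u h hhpos hh2 hcu hpde M2
    (by
      intro x hx hxh
      have h1 := hslope x hx (x + h) (by linarith) hxh
      have h2 : B * (x + h - x) = B * h := by ring_nf
      rw [h2] at h1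
      calc u (x + h) 0 - u x 0 ≤ B * h := h1
        _ ≤ M2 * h := mul_le_mul_of_nonneg_right (le_max_right _ _) hhpos.le)
    (by
      intro t ht ξ hξ
      have hmem : (ξ, t) ∈ Q := ⟨Or.inl ⟨hξ.1.le, by linarith [hξ.2]⟩, ⟨ht.1.le, ht.2⟩⟩
      calc ux u ξ t ≤ M1 := hq1max (ξ, t) hmem
        _ ≤ M2 := le_max_left _ _)
    (by
      intro t ht ξ hξ
      have hmem : (ξ, t) ∈ Q := ⟨Or.inr ⟨by linarith [hξ.1], hξ.2.le⟩, ⟨ht.1.le, ht.2⟩⟩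
      calc ux u ξ t ≤ M1 := hq1max (ξ, t) hmem
        _ ≤ M2 := le_max_left _ _)
  have hx0ge : (-1:ℝ) ≤ x0 := by linarith
  obtain ⟨ξ, hξ, hEq⟩ := mvt_slice T u hcu hdiffx ht0 hx0ge (by linarith : x0 < x0 + h) hx0h
  have hub : u (x0 + h) t0 - u x0 t0 ≤ M2 * h :=
    hmain x0 hx0ge hx0h t0 ⟨ht0.1.le, ht0.2⟩
  have hξmem : (ξ, t0) ∈ R := ⟨⟨by linarith [hξ.1], by linarith [hξ.2]⟩, ⟨ht0.1.le, ht0.2⟩⟩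
  have hdist : dist (ξ, t0) ((x0, t0) : ℝ × ℝ) < δ2 := by
    rw [Prod.dist_eq]
    apply max_lt
    · rw [Real.dist_eq, abs_of_pos (show (0:ℝ) < ξ - x0 by linarith [hξ.1])]
      linarith [hξ.2]
    · rw [dist_self]
      exact hδ2pos
  have hclose := hδ2 hξmem hdist
  have hWlow : M2 < ux u ξ t0 := by
    have h1 : dist (ux u ξ t0) M < M - M2 := hclose
    rw [Real.dist_eq] at h1
    have := abs_lt.mp h1
    linarith [this.1]
  have hhr : x0 + h - x0 = h := by ring
  rw [hhr] at hEq
  nlinarith [hWlow, hub, hEq, hhpos]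

/-- gradient estimate. If `u` is a classical solution of (B) on
`[-1,1] × [0,T]` with `u0 ∈ C¹([-1,1])` and `|u| ≤ K`, then
`|u_x| ≤ max{ sup_{[-1,1]} |u0'|, K }` on `[-1,1] × [0,T]`. -/
theorem stmt_7 (T K : ℝ) (hT : 0 < T) (u0 : ℝ → ℝ)
    (hu0 : ContDiffOn ℝ 1 u0 (Set.Icc (-1 : ℝ) 1))
    (u : ℝ → ℝ → ℝ) (hu : IsClassicalSolB u u0 T)
    (hK : ∀ x ∈ Set.Icc (-1 : ℝ) 1, ∀ t ∈ Set.Icc (0 : ℝ) T, |u x t| ≤ K) :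
    ∀ x ∈ Set.Icc (-1 : ℝ) 1, ∀ t ∈ Set.Icc (0 : ℝ) T,
      |ux u x t| ≤
        max (sSup ((fun y => |derivWithin u0 (Set.Icc (-1 : ℝ) 1) y|) ''
          Set.Icc (-1 : ℝ) 1)) K := by
  obtain ⟨hcu, hcw, hpde, hbc, hic⟩ := hu
  set M0 : ℝ := sSup ((fun y => |derivWithin u0 (Set.Icc (-1 : ℝ) 1) y|) '' Set.Icc (-1 : ℝ) 1)
    with hM0def
  set B : ℝ := max M0 K with hBdef
  have hM0B : M0 ≤ B := le_max_left _ _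
  have hKB : K ≤ B := le_max_right _ _
  have huniq : UniqueDiffOn ℝ (Icc (-1:ℝ) 1) := uniqueDiffOn_Icc (by norm_num)
  have hdercont : ContinuousOn (fun y => |derivWithin u0 (Icc (-1:ℝ) 1) y|) (Icc (-1:ℝ) 1) :=
    (hu0.continuousOn_derivWithin huniq le_rfl).abs
  have hbdd : BddAbove ((fun y => |derivWithin u0 (Icc (-1:ℝ) 1) y|) '' Icc (-1:ℝ) 1) :=
    (isCompact_Icc.image_of_continuousOn hdercont).bddAbove
  have hM0 : ∀ x ∈ Icc (-1:ℝ) 1, |derivWithin u0 (Icc (-1:ℝ) 1) x| ≤ M0 :=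
    fun x hx => le_csSup hbdd (mem_image_of_mem _ hx)
  -- derivative of u0 at interior points
  have hu0diff : ∀ x ∈ Ioo (-1:ℝ) 1, HasDerivAt u0 (derivWithin u0 (Icc (-1:ℝ) 1) x) x := by
    intro x hx
    have hnh : Icc (-1:ℝ) 1 ∈ 𝓝 x := Icc_mem_nhds hx.1 hx.2
    have hd : DifferentiableAt ℝ u0 x :=
      ((hu0.differentiableOn one_ne_zero) x ⟨hx.1.le, hx.2.le⟩).differentiableAt hnh
    have : derivWithin u0 (Icc (-1:ℝ) 1) x = deriv u0 x := derivWithin_of_mem_nhds hnh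
    rw [this]
    exact hd.hasDerivAt
  -- identification of ux at time 0 on the interior
  have hint : ∀ x ∈ Ioo (-1:ℝ) 1, ux u x 0 = derivWithin u0 (Icc (-1:ℝ) 1) x := by
    intro x hx
    have hnh : Icc (-1:ℝ) 1 ∈ 𝓝 x := Icc_mem_nhds hx.1 hx.2
    have hev : (fun y => u y 0) =ᶠ[𝓝 x] u0 :=
      eventually_of_mem hnh (fun y hy => hic y hy)
    have h1 : ux u x 0 = deriv u0 x := hev.deriv_eq
    have h2 : derivWithin u0 (Icc (-1:ℝ) 1) x = deriv u0 x := derivWithin_of_mem_nhds hnh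
    rw [h1, h2]
  have hintabs : ∀ x ∈ Ioo (-1:ℝ) 1, |ux u x 0| ≤ M0 := by
    intro x hx
    rw [hint x hx]
    exact hM0 x ⟨hx.1.le, hx.2.le⟩
  -- extend to closed interval by continuity
  have habs0 : ∀ x ∈ Icc (-1:ℝ) 1, |ux u x 0| ≤ M0 := by
    have hend : ∀ z ∈ Icc (-1:ℝ) 1, Filter.NeBot (𝓝[Ioo (-1:ℝ) 1] z) → |ux u z 0| ≤ M0 := by
      intro z hz hne
      have hcwAt : ContinuousWithinAt (fun p : ℝ × ℝ => ux u p.1 p.2)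
          (Icc (-1:ℝ) 1 ×ˢ Icc (0:ℝ) T) (z, 0) := hcw _ ⟨hz, ⟨le_refl 0, hT.le⟩⟩
      have hmap : ContinuousWithinAt (fun y : ℝ => ((y, 0) : ℝ × ℝ)) (Icc (-1:ℝ) 1) z :=
        (continuous_id.prodMk continuous_const).continuousWithinAt
      have hmaps : MapsTo (fun y : ℝ => ((y, 0) : ℝ × ℝ)) (Icc (-1:ℝ) 1)
          (Icc (-1:ℝ) 1 ×ˢ Icc (0:ℝ) T) := by
        intro y hy
        exact ⟨hy, ⟨le_refl _, hT.le⟩⟩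
      have hg : ContinuousWithinAt (fun y => ux u y 0) (Icc (-1:ℝ) 1) z :=
        ContinuousWithinAt.comp (g := fun p : ℝ × ℝ => ux u p.1 p.2)
          (f := fun y : ℝ => ((y, 0) : ℝ × ℝ)) hcwAt hmap hmaps
      have hgt : Tendsto (fun y => |ux u y 0|) (𝓝[Ioo (-1:ℝ) 1] z) (𝓝 (|ux u z 0|)) :=
        ((continuous_abs.tendsto _).comp hg).mono_left (nhdsWithin_mono _ Ioo_subset_Icc_self)
      exact le_of_tendsto hgt
        (eventually_of_mem self_mem_nhdsWithin (fun y hy => hintabs y hy))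
    intro x hx
    rcases eq_or_lt_of_le hx.1 with h1 | h1
    · refine hend x hx ?_
      apply mem_closure_iff_nhdsWithin_neBot.mp
      rw [closure_Ioo (by norm_num : (-1:ℝ) ≠ 1)]
      exact hx
    rcases eq_or_lt_of_le hx.2 with h2 | h2
    · refine hend x hx ?_
      apply mem_closure_iff_nhdsWithin_neBot.mp
      rw [closure_Ioo (by norm_num : (-1:ℝ) ≠ 1)]
      exact hx
    · exact hintabs x ⟨h1, h2⟩
  -- slope bound at time 0
  have hslope2 : ∀ x, -1 ≤ x → ∀ y, x < y → y ≤ 1 → |u y 0 - u x 0| ≤ M0 * (y - x) := by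
    intro x hx y hxy hy
    have hex : u x 0 = u0 x := hic x ⟨hx, by linarith⟩
    have hey : u y 0 = u0 y := hic y ⟨by linarith, hy⟩
    have hcont : ContinuousOn u0 (Icc x y) := by
      apply (hu0.continuousOn).mono
      intro z hz
      exact ⟨by linarith [hz.1], by linarith [hz.2]⟩
    have hder : ∀ z ∈ Ioo x y, HasDerivAt u0 (derivWithin u0 (Icc (-1:ℝ) 1) z) z :=
      fun z hz => hu0diff z ⟨by linarith [hz.1], by linarith [hz.2]⟩
    obtain ⟨ξ, hξ, hEq⟩ := exists_hasDerivAt_eq_slope u0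
      (fun z => derivWithin u0 (Icc (-1:ℝ) 1) z) hxy hcont hder
    have hξM : |derivWithin u0 (Icc (-1:ℝ) 1) ξ| ≤ M0 :=
      hM0 ξ ⟨by linarith [hξ.1], by linarith [hξ.2]⟩
    have hyx : (0:ℝ) < y - x := by linarith
    rw [hex, hey]
    have : u0 y - u0 x = derivWithin u0 (Icc (-1:ℝ) 1) ξ * (y - x) := by
      field_simp at hEq
      linarith [hEq]
    rw [this, abs_mul, abs_of_pos hyx]
    exact mul_le_mul_of_nonneg_right hξM hyx.le
  -- the negated solution
  set v : ℝ → ℝ → ℝ := fun x t => -(u x t) with hvdef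
  have huxv : ∀ x t, ux v x t = -(ux u x t) := by
    intro x t
    show deriv (fun y => -(u y t)) x = -deriv (fun y => u y t) x
    exact deriv.neg
  have huxvfun : ∀ t, (fun y => ux v y t) = fun y => -(ux u y t) :=
    fun t => funext (fun y => huxv y t)
  have huxxv : ∀ x t, uxx v x t = -(uxx u x t) := by
    intro x t
    show deriv (fun y => ux v y t) x = -deriv (fun y => ux u y t) x
    rw [huxvfun t]
    exact deriv.neg
  have hutv : ∀ x t, ut v x t = -(ut u x t) := by
    intro x t
    show deriv (fun s => -(u x s)) t = -deriv (fun s => u x s) t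
    exact deriv.neg
  have hcuv : ContinuousOn (fun p : ℝ × ℝ => v p.1 p.2) (Icc (-1:ℝ) 1 ×ˢ Icc (0:ℝ) T) :=
    hcu.neg
  have hcwv : ContinuousOn (fun p : ℝ × ℝ => ux v p.1 p.2) (Icc (-1:ℝ) 1 ×ˢ Icc (0:ℝ) T) := by
    have : (fun p : ℝ × ℝ => ux v p.1 p.2) = fun p : ℝ × ℝ => -(ux u p.1 p.2) :=
      funext (fun p => huxv p.1 p.2)
    rw [this]
    exact hcw.neg
  have hpdev : ∀ t ∈ Ioc (0:ℝ) T, ∀ x ∈ Ioo (-1:ℝ) 1,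
      DifferentiableAt ℝ (fun y => v y t) x ∧
      DifferentiableAt ℝ (fun y => ux v y t) x ∧
      DifferentiableAt ℝ (fun s => v x s) t ∧
      ut v x t = uxx v x t / (1 + ux v x t ^ 2) := by
    intro t ht x hx
    obtain ⟨hd, hw, htd, he⟩ := hpde t ht x hx
    refine ⟨hd.neg, ?_, htd.neg, ?_⟩
    · rw [huxvfun t]
      exact hw.neg
    · rw [hutv, huxxv, huxv, he]
      ring
  -- lateral bounds
  have hlatu : ∀ t ∈ Ioc (0:ℝ) T, ux u 1 t ≤ B ∧ ux u (-1) t ≤ B := by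
    intro t ht
    have htI : t ∈ Icc (0:ℝ) T := ⟨ht.1.le, ht.2⟩
    obtain ⟨hb1, hb2⟩ := hbc t ht
    constructor
    · rw [hb1]
      calc u 1 t ≤ |u 1 t| := le_abs_self _
        _ ≤ K := hK 1 ⟨by norm_num, le_refl 1⟩ t htI
        _ ≤ B := hKB
    · rw [hb2]
      calc -u (-1) t ≤ |u (-1) t| := neg_le_abs _
        _ ≤ K := hK (-1) ⟨le_refl _, by norm_num⟩ t htI
        _ ≤ B := hKB
  have hlatv : ∀ t ∈ Ioc (0:ℝ) T, ux v 1 t ≤ B ∧ ux v (-1) t ≤ B := by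
    intro t ht
    have htI : t ∈ Icc (0:ℝ) T := ⟨ht.1.le, ht.2⟩
    obtain ⟨hb1, hb2⟩ := hbc t ht
    constructor
    · rw [huxv, hb1]
      calc -u 1 t ≤ |u 1 t| := neg_le_abs _
        _ ≤ K := hK 1 ⟨by norm_num, le_refl 1⟩ t htI
        _ ≤ B := hKB
    · rw [huxv, hb2, neg_neg]
      calc u (-1) t ≤ |u (-1) t| := le_abs_self _
        _ ≤ K := hK (-1) ⟨le_refl _, by norm_num⟩ t htI
        _ ≤ B := hKB
  -- apply the one-sided bound twice
  have hu_up := one_sided T B hT u hcu hcw hpde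
    (fun x hx => le_trans (le_trans (le_abs_self _) (habs0 x hx)) hM0B)
    (fun x hx y hxy hy => by
      have := hslope2 x hx y hxy hy
      have h1 : u y 0 - u x 0 ≤ M0 * (y - x) := le_trans (le_abs_self _) this
      have h2 : M0 * (y - x) ≤ B * (y - x) :=
        mul_le_mul_of_nonneg_right hM0B (by linarith)
      linarith)
    hlatu
  have hv_up := one_sided T B hT v hcuv hcwv hpdev
    (fun x hx => by
      rw [huxv]
      exact le_trans (le_trans (neg_le_abs _) (habs0 x hx)) hM0B)
    (fun x hx y hxy hy => by
      have := hslope2 x hx y hxy hy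
      have h1 : -(u y 0 - u x 0) ≤ M0 * (y - x) := le_trans (neg_le_abs _) (by rwa [abs_sub_comm] at this ⊢)
      have h2 : M0 * (y - x) ≤ B * (y - x) :=
        mul_le_mul_of_nonneg_right hM0B (by linarith)
      show v y 0 - v x 0 ≤ B * (y - x)
      simp only [hvdef]
      linarith)
    hlatv
  intro x hx t ht
  rw [abs_le]
  constructor
  · have := hv_up x hx t ht
    rw [huxv] at this
    linarith
  · exact hu_up x hx t ht
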